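/- Let E = (n_k) ⊂ ℤ be a Ka-set, i.e. there exists a continuous probability measure μ on 𝕋 with inf_k |μ̂(n_k)| > 0. Then the set W(E) of x ∈ 𝕋 for which (n_k x) is not uniformly distributed mod 1 is uncountable. -/

import Mathlib

open MeasureTheory Filter

private lemma norm_fourier1 (n : ℤ) (x : AddCircle (1:ℝ)) : ‖fourier n x‖ = 1 := by
  rw [fourier_apply]; exact Circle.norm_coe _

private lemma fourier_sub1 (m : ℤ) (z w : AddCircle (1:ℝ)) :
    fourier m (z - w) = fourier m z * fourier (-m) w := by
  induction z using QuotientAddGroup.induction_on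
  induction w using QuotientAddGroup.induction_on
  rw [← QuotientAddGroup.mk_sub]
  simp only [fourier_coe_apply]
  rw [← Complex.exp_add]
  push_cast
  ring_nf

/-- If `E = (n_k)` is a Ka-set (there is a continuous probability measure `μ` on the
circle with `inf_k |μ̂(n_k)| > 0`), then the set `W(E)` of `x` for which `(n_k x)` is
not uniformly distributed mod 1 is uncountable. -/
theorem Ka_set_nonnormal_uncountable (E : ℕ → ℤ)
    (μ : Measure (AddCircle (1 : ℝ))) [IsProbabilityMeasure μ] [NullSingletonClass μ]
    (δ : ℝ) (hδ : 0 < δ)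
    (hKa : ∀ k : ℕ, δ ≤ ‖∫ x, fourier (-(E k)) x ∂μ‖) :
    ¬ Set.Countable {x : ℝ |
      ¬ (∀ h : ℤ, h ≠ 0 →
        Tendsto (fun N : ℕ =>
            (∑ k ∈ Finset.range N,
              Complex.exp (2 * Real.pi * Complex.I * (h : ℂ) * (E k : ℂ) * (x : ℂ))) /
            (N : ℂ))
          atTop (nhds 0))} := by
  intro hcW
  set W : Set ℝ := {x : ℝ |
      ¬ (∀ h : ℤ, h ≠ 0 →
        Tendsto (fun N : ℕ =>
            (∑ k ∈ Finset.range N,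
              Complex.exp (2 * Real.pi * Complex.I * (h : ℂ) * (E k : ℂ) * (x : ℂ))) /
            (N : ℂ))
          atTop (nhds 0))} with hW_def
  set c : ℕ → ℂ := fun k => ∫ x, fourier (-(E k)) x ∂μ with hc_def
  -- the image of W on the circle
  set S : Set (AddCircle (1:ℝ)) := (fun x : ℝ => (x : AddCircle (1:ℝ))) '' W with hS_def
  have hS : S.Countable := hcW.image _
  -- the bad set in the product
  set B : Set (AddCircle (1:ℝ) × AddCircle (1:ℝ)) := {p | p.1 - p.2 ∈ S} with hB_def
  have hB0 : (μ.prod μ) B = 0 := by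
    have hSm : MeasurableSet S := hS.measurableSet
    have hBm : MeasurableSet B := (measurable_fst.sub measurable_snd) hSm
    rw [Measure.prod_apply hBm]
    have key : ∀ z : AddCircle (1:ℝ), μ {w | z - w ∈ S} = 0 := by
      intro z
      have : {w : AddCircle (1:ℝ) | z - w ∈ S} = (fun s => z - s) '' S := by
        ext w; simp only [Set.mem_setOf_eq, Set.mem_image]
        constructor
        · intro h; exact ⟨z - w, h, sub_sub_cancel z w⟩
        · rintro ⟨s, hs, rfl⟩; simpa using hs
      rw [this]
      exact (hS.image _).measure_zero μ
    have : ∀ z : AddCircle (1:ℝ), μ (Prod.mk z ⁻¹' B) = 0 := fun z => key z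
    rw [lintegral_congr this, lintegral_zero]
  -- the averaging functions
  set F : ℕ → AddCircle (1:ℝ) × AddCircle (1:ℝ) → ℂ := fun N p =>
    (∑ k ∈ Finset.range N, fourier (-(E k)) (p.1 - p.2)) / (N : ℂ) with hF_def
  have hFc : ∀ N, Continuous (F N) := fun N =>
    (continuous_finset_sum _ fun k _ =>
      (fourier (-(E k))).continuous.comp (continuous_fst.sub continuous_snd)).div_const _
  -- uniform bound
  have hFbd : ∀ N p, ‖F N p‖ ≤ 1 := by
    intro N p
    rcases Nat.eq_zero_or_pos N with h0 | h1
    · simp [hF_def, h0]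
    · have hsum : ‖∑ k ∈ Finset.range N, fourier (-(E k)) (p.1 - p.2)‖ ≤ N := by
        refine (norm_sum_le _ _).trans ?_
        simp [norm_fourier1, Circle.norm_coe]
      rw [hF_def]
      simp only [norm_div, Complex.norm_natCast]
      rw [div_le_one (by exact_mod_cast h1)]
      exact hsum
  -- a.e. convergence to 0
  have hlim : ∀ᵐ p ∂(μ.prod μ), Tendsto (fun N => F N p) atTop (nhds 0) := by
    have hsub : {p : AddCircle (1:ℝ) × AddCircle (1:ℝ) |
        ¬ Tendsto (fun N => F N p) atTop (nhds 0)} ⊆ B := by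
      intro p hp
      by_contra hpB
      apply hp
      obtain ⟨x, hx⟩ := QuotientAddGroup.mk_surjective (p.1 - p.2)
      have hxW : x ∉ W := by
        intro hxW
        exact hpB (by exact ⟨x, hxW, hx⟩)
      have hxT := not_not.mp hxW (-1) (by norm_num)
      have heq : (fun N : ℕ =>
          (∑ k ∈ Finset.range N,
            Complex.exp (2 * Real.pi * Complex.I * ((-1 : ℤ) : ℂ) * (E k : ℂ) * (x : ℂ))) /
          (N : ℂ)) = fun N => F N p := by
        funext N
        rw [hF_def]
        congr 1
        refine Finset.sum_congr rfl fun k _ => ?_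
        rw [← hx, fourier_coe_apply]
        congr 1
        push_cast
        ring
      rw [heq] at hxT
      exact hxT
    rw [ae_iff]
    exact measure_mono_null hsub hB0
  -- dominated convergence
  have hDCT : Tendsto (fun N => ∫ p, F N p ∂(μ.prod μ)) atTop (nhds 0) := by
    have := tendsto_integral_of_dominated_convergence (fun _ => (1:ℝ))
      (fun N => (hFc N).aestronglyMeasurable)
      (integrable_const 1)
      (fun N => ae_of_all _ fun p => hFbd N p)
      (by simpa using hlim)
    simpa using this
  -- computing the integrals
  have hint : ∀ m : ℤ, Integrable
      (fun p : AddCircle (1:ℝ) × AddCircle (1:ℝ) => (fourier m (p.1 - p.2) : ℂ)) (μ.prod μ) := by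
    intro m
    have hc : Continuous (fun p : AddCircle (1:ℝ) × AddCircle (1:ℝ) =>
        (fourier m (p.1 - p.2) : ℂ)) :=
      (fourier m).continuous.comp (continuous_fst.sub continuous_snd)
    exact (integrable_const (1:ℝ)).mono' hc.aestronglyMeasurable
      (ae_of_all _ fun p => (norm_fourier1 m _).le)
  have hterm : ∀ k : ℕ,
      ∫ p : AddCircle (1:ℝ) × AddCircle (1:ℝ), (fourier (-(E k)) (p.1 - p.2) : ℂ) ∂(μ.prod μ)
        = (Complex.normSq (c k) : ℂ) := by
    intro k
    have h1 : ∫ p : AddCircle (1:ℝ) × AddCircle (1:ℝ),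
        (fourier (-(E k)) (p.1 - p.2) : ℂ) ∂(μ.prod μ)
        = (∫ x, fourier (-(E k)) x ∂μ) * ∫ x, fourier (E k) x ∂μ := by
      rw [← integral_prod_mul (fun x => (fourier (-(E k)) x : ℂ))
        (fun y => (fourier (E k) y : ℂ))]
      congr 1
      funext p
      rw [fourier_sub1, neg_neg]
    have h2 : ∫ x, fourier (E k) x ∂μ = (starRingEnd ℂ) (c k) := by
      rw [hc_def, ← integral_conj]
      congr 1
      funext x
      rw [← fourier_neg, neg_neg]
    rw [h1, h2, hc_def, Complex.mul_conj]
  have hIF : ∀ N, ∫ p, F N p ∂(μ.prod μ)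
      = ((∑ k ∈ Finset.range N, Complex.normSq (c k) : ℝ) : ℂ) / (N : ℂ) := by
    intro N
    rw [hF_def]
    simp only [integral_div]
    congr 1
    rw [integral_finset_sum _ (fun k _ => hint (-(E k)))]
    push_cast
    exact Finset.sum_congr rfl fun k _ => hterm k
  -- contradiction
  have hre : Tendsto (fun N => (∫ p, F N p ∂(μ.prod μ)).re) atTop (nhds 0) := by
    have := (Complex.continuous_re.tendsto 0).comp hDCT
    exact this
  have hev : ∀ᶠ N in atTop, δ ^ 2 ≤ (∫ p, F N p ∂(μ.prod μ)).re := by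
    filter_upwards [eventually_ge_atTop 1] with N hN
    rw [hIF]
    have hsum : (N : ℝ) * δ ^ 2 ≤ ∑ k ∈ Finset.range N, Complex.normSq (c k) := by
      calc (N : ℝ) * δ ^ 2 = ∑ _k ∈ Finset.range N, δ ^ 2 := by
            simp [mul_comm]
          _ ≤ ∑ k ∈ Finset.range N, Complex.normSq (c k) := by
            refine Finset.sum_le_sum fun k _ => ?_
            rw [Complex.normSq_eq_norm_sq]
            exact pow_le_pow_left₀ hδ.le (hKa k) 2
    have hNpos : (0:ℝ) < N := by exact_mod_cast hN
    have : (((∑ k ∈ Finset.range N, Complex.normSq (c k) : ℝ) : ℂ) / (N : ℂ)).re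
        = (∑ k ∈ Finset.range N, Complex.normSq (c k)) / (N : ℝ) := by
      rw [show ((N:ℕ):ℂ) = ((N:ℝ):ℂ) by push_cast; ring, ← Complex.ofReal_div,
        Complex.ofReal_re]
    rw [this, le_div_iff₀ hNpos]
    linarith [hsum]
  have : δ ^ 2 ≤ 0 := ge_of_tendsto hre hev
  nlinarith
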